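/- Let G = (V, E_1, …, E_k) be a multilayer graph. The minimum of Σ_{i∈[k]} |E_i∖S_i| + d_k(S_1,…,S_k) over all families of labelings S_i ⊆ E_i (i ∈ [k]) in which each S_i fulfills the STC for E_i equals the minimum of Σ_{i∈[k]} |E_i∖S_i| over all such families that additionally satisfy d_k(S_1,…,S_k) = 0. -/

import Mathlib

open Finset

/-- A wedge `(v, {u, w})` of an edge set `E`. -/
def IsWedge {V : Type*} (E : Finset (Sym2 V)) (v u w : V) : Prop :=
  u ≠ v ∧ v ≠ w ∧ u ≠ w ∧ s(u, v) ∈ E ∧ s(v, w) ∈ E ∧ s(u, w) ∉ E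

/-- A labeling `S ⊆ E` fulfills the strong triadic closure for `E`. -/
def FulfillsSTC {V : Type*} (E S : Finset (Sym2 V)) : Prop :=
  ∀ u v w : V, u ≠ v → v ≠ w → u ≠ w → s(u, v) ∈ S → s(v, w) ∈ S → s(u, w) ∈ E

/-- `s(e)`: the number of layers in which `e` is labeled strong. -/
def sCount {V : Type*} [DecidableEq V] {k : ℕ} (Ss : Fin k → Finset (Sym2 V))
    (e : Sym2 V) : ℕ :=
  (Finset.univ.filter fun i => e ∈ Ss i).card

/-- `w(e)`: the number of layers in which `e` is labeled weak. -/
def wCount {V : Type*} [DecidableEq V] {k : ℕ} (Es Ss : Fin k → Finset (Sym2 V))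
    (e : Sym2 V) : ℕ :=
  (Finset.univ.filter fun i => e ∈ Es i ∧ e ∉ Ss i).card

/-- `d_k(S_1, …, S_k) = ∑_{e ∈ E, w(e) > 0} s(e)`: the number of disagreements. -/
def disagree {V : Type*} [DecidableEq V] {k : ℕ} (Es Ss : Fin k → Finset (Sym2 V)) : ℕ :=
  ∑ e ∈ (Finset.univ.biUnion Es).filter (fun e => 0 < wCount Es Ss e), sCount Ss e

/-- The minimum of `∑_i |E_i ∖ S_i| + d_k(S_1, …, S_k)` over all families of labelings
each fulfilling the STC equals the minimum of `∑_i |E_i ∖ S_i|` over all such families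
with no disagreements. -/
theorem min_multilayer_stc_eq_min_consistent {V : Type*} [DecidableEq V] {k : ℕ}
    (Es : Fin k → Finset (Sym2 V)) :
    sInf {n : ℕ | ∃ Ss : Fin k → Finset (Sym2 V),
        (∀ i, Ss i ⊆ Es i) ∧ (∀ i, FulfillsSTC (Es i) (Ss i)) ∧
        n = (∑ i : Fin k, (Es i \ Ss i).card) + disagree Es Ss}
      = sInf {n : ℕ | ∃ Ss : Fin k → Finset (Sym2 V),
        (∀ i, Ss i ⊆ Es i) ∧ (∀ i, FulfillsSTC (Es i) (Ss i)) ∧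
        disagree Es Ss = 0 ∧ n = ∑ i : Fin k, (Es i \ Ss i).card} := by
  set A := {n : ℕ | ∃ Ss : Fin k → Finset (Sym2 V),
        (∀ i, Ss i ⊆ Es i) ∧ (∀ i, FulfillsSTC (Es i) (Ss i)) ∧
        n = (∑ i : Fin k, (Es i \ Ss i).card) + disagree Es Ss} with hA
  set B := {n : ℕ | ∃ Ss : Fin k → Finset (Sym2 V),
        (∀ i, Ss i ⊆ Es i) ∧ (∀ i, FulfillsSTC (Es i) (Ss i)) ∧
        disagree Es Ss = 0 ∧ n = ∑ i : Fin k, (Es i \ Ss i).card} with hB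
  have hempty : ∀ i, FulfillsSTC (Es i) (∅ : Finset (Sym2 V)) := by
    intro i u v w _ _ _ h; simp at h
  have hdemp : disagree Es (fun _ => (∅ : Finset (Sym2 V))) = 0 := by
    apply Finset.sum_eq_zero; intro e _; simp [sCount]
  have hAne : A.Nonempty := ⟨_, fun _ => ∅, fun i => by simp, hempty, rfl⟩
  have hBne : B.Nonempty := ⟨_, fun _ => ∅, fun i => by simp, hempty, hdemp, rfl⟩
  -- Given any admissible family, produce a consistent one with no larger cost.
  have key : ∀ n ∈ A, ∃ m ∈ B, m ≤ n := by
    rintro n ⟨Ss, hsub, hstc, rfl⟩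
    set D := (Finset.univ.biUnion Es).filter (fun e => 0 < wCount Es Ss e) with hD
    set Ss' : Fin k → Finset (Sym2 V) := fun i => Ss i \ D with hSs'
    have hsub' : ∀ i, Ss' i ⊆ Es i := fun i =>
      (Finset.sdiff_subset).trans (hsub i)
    have hstc' : ∀ i, FulfillsSTC (Es i) (Ss' i) := by
      intro i u v w h1 h2 h3 h4 h5
      exact hstc i u v w h1 h2 h3 (Finset.mem_sdiff.mp h4).1 (Finset.mem_sdiff.mp h5).1
    have hd0 : disagree Es Ss' = 0 := by
      apply Finset.sum_eq_zero
      intro e he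
      rw [Finset.mem_filter] at he
      obtain ⟨heE, hw⟩ := he
      apply Finset.card_eq_zero.mpr
      rw [Finset.filter_eq_empty_iff]
      intro i _
      obtain ⟨j, hj⟩ := Finset.card_pos.mp hw
      rw [Finset.mem_filter] at hj
      by_cases hwe : 0 < wCount Es Ss e
      · intro hmem
        exact (Finset.mem_sdiff.mp hmem).2 (Finset.mem_filter.mpr ⟨heE, hwe⟩)
      · -- then e ∈ Ss j whenever e ∈ Es j, and e ∉ D, contradiction with hj
        exfalso
        have : e ∈ Ss j := by
          by_contra hne
          exact hwe (Finset.card_pos.mpr ⟨j, Finset.mem_filter.mpr ⟨Finset.mem_univ j, hj.2.1, hne⟩⟩)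
        have heD : e ∉ D := fun hmem => hwe (Finset.mem_filter.mp hmem).2
        exact hj.2.2 (Finset.mem_sdiff.mpr ⟨this, heD⟩)
    refine ⟨∑ i : Fin k, (Es i \ Ss' i).card, ⟨Ss', hsub', hstc', hd0, rfl⟩, ?_⟩
    have hsplit : ∀ i, (Es i \ Ss' i).card = (Es i \ Ss i).card + (Ss i ∩ D).card := by
      intro i
      have heq : Es i \ Ss' i = (Es i \ Ss i) ∪ (Ss i ∩ D) := by
        ext e
        simp only [hSs', Finset.mem_sdiff, Finset.mem_union, Finset.mem_inter]
        constructor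
        · rintro ⟨h1, h2⟩
          by_cases h3 : e ∈ Ss i
          · right; exact ⟨h3, by tauto⟩
          · left; exact ⟨h1, h3⟩
        · rintro (⟨h1, h2⟩ | ⟨h1, h2⟩)
          · exact ⟨h1, by tauto⟩
          · exact ⟨hsub i h1, by tauto⟩
      rw [heq, Finset.card_union_of_disjoint]
      rw [Finset.disjoint_left]
      intro e he he'
      exact (Finset.mem_sdiff.mp he).2 (Finset.mem_inter.mp he').1
    have hsum : ∑ i : Fin k, (Ss i ∩ D).card = disagree Es Ss := by
      have h1 : ∀ i : Fin k, (Ss i ∩ D).card = ∑ e ∈ D, if e ∈ Ss i then 1 else 0 := by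
        intro i
        rw [← Finset.card_filter]
        congr 1
        rw [Finset.filter_mem_eq_inter, Finset.inter_comm]
      simp only [h1]
      rw [Finset.sum_comm, disagree, ← hD]
      apply Finset.sum_congr rfl
      intro e _
      rw [sCount, Finset.card_filter]
    refine le_of_eq ?_
    calc ∑ i : Fin k, (Es i \ Ss' i).card
        = ∑ i : Fin k, ((Es i \ Ss i).card + (Ss i ∩ D).card) := by
          exact Finset.sum_congr rfl (fun i _ => hsplit i)
      _ = (∑ i : Fin k, (Es i \ Ss i).card) + ∑ i : Fin k, (Ss i ∩ D).card := by
          rw [Finset.sum_add_distrib]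
      _ = (∑ i : Fin k, (Es i \ Ss i).card) + disagree Es Ss := by rw [hsum]
  apply le_antisymm
  · apply csInf_le_csInf (OrderBot.bddBelow A) hBne
    rintro n ⟨Ss, h1, h2, h3, h4⟩
    exact ⟨Ss, h1, h2, by rw [h4, h3, Nat.add_zero]⟩
  · obtain ⟨m, hm, hle⟩ := key _ (Nat.sInf_mem hAne)
    exact le_trans (Nat.sInf_le hm) hle
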